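/- The sum over nonzero lattice momenta p ∈ 2πℤ³ \ {0} of the quantity p² + 8πa − √(|p|⁴ + 16πa p²) − (8πa)²/(2p²) converges absolutely, for any a > 0. -/

import Mathlib

open Real

lemma key_bound (b x : ℝ) (hb : 0 < b) (hx : 0 < x) :
    |x + b - Real.sqrt (x^2 + 2*b*x) - b^2/(2*x)| ≤ b^3 / x^2 := by
  set r := Real.sqrt (x^2 + 2*b*x) with hrdef
  have hr0 : 0 ≤ r := Real.sqrt_nonneg _
  have hr2 : r^2 = x^2 + 2*b*x := Real.sq_sqrt (by positivity)
  have hrx : x ≤ r := by nlinarith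
  have hrxb : r ≤ x + b := by nlinarith
  have hden : (0:ℝ) < x + b + r := by positivity
  have heq : x + b - r - b^2/(2*x) = b^2 * (x - b - r) / (2*x*(x+b+r)) := by
    field_simp
    nlinarith [hr2]
  rw [heq, abs_div, abs_mul]
  have h1 : |x - b - r| ≤ 2*b := by
    rw [abs_le]; constructor <;> nlinarith
  have h2 : (4:ℝ)*x^2 ≤ |2*x*(x+b+r)| := by
    rw [abs_of_pos (by positivity)]; nlinarith
  have h3 : |b^2| * |x - b - r| ≤ 2*b^3 := by
    rw [abs_of_nonneg (by positivity)]; nlinarith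
  calc |b^2| * |x - b - r| / |2*x*(x+b+r)| ≤ (2*b^3) / (4*x^2) :=
        div_le_div₀ (by positivity) h3 (by positivity) h2
    _ ≤ b^3 / x^2 := by
        rw [div_le_div_iff₀ (by positivity) (by positivity)]
        nlinarith [mul_pos (pow_pos hb 3) (pow_pos hx 2)]

noncomputable def hfun (n : ℤ) : ℝ := (1 + (n:ℝ)^2) ^ (-(2/3) : ℝ)

lemma hfun_nonneg (n : ℤ) : 0 ≤ hfun n := Real.rpow_nonneg (by positivity) _

lemma hfun_nat_summable : Summable (fun n : ℕ => hfun (n : ℤ)) := by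
  have hs : Summable (fun n : ℕ => ((n:ℝ)+1) ^ (-(4/3) : ℝ)) := by
    have := Real.summable_nat_rpow.mpr (show (-(4/3):ℝ) < -1 by norm_num)
    have h2 := (summable_nat_add_iff 1).mpr this
    refine h2.congr fun n => ?_
    push_cast; ring_nf
  refine (hs.mul_left ((2:ℝ)^((2/3):ℝ))).of_nonneg_of_le (fun n => hfun_nonneg _) (fun n => ?_)
  have h1 : ((((n:ℝ)+1)^2)/2) ^ (-(2/3):ℝ) = (2:ℝ)^((2/3):ℝ) * ((n:ℝ)+1) ^ (-(4/3):ℝ) := by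
    rw [Real.div_rpow (by positivity) (by norm_num), ← Real.rpow_natCast ((n:ℝ)+1) 2,
      ← Real.rpow_mul (by positivity), Real.rpow_neg (by norm_num : (0:ℝ) ≤ 2)]
    rw [div_inv_eq_mul]
    norm_num [mul_comm]
  rw [← h1]
  unfold hfun
  apply Real.rpow_le_rpow_of_nonpos (by positivity) (by push_cast; nlinarith [sq_nonneg ((n:ℝ)-1)]) (by norm_num)

lemma hfun_summable : Summable hfun := by
  apply Summable.of_nat_of_neg hfun_nat_summable
  refine hfun_nat_summable.congr fun n => ?_
  unfold hfun; push_cast; ring_nf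

noncomputable def e3 : (ℤ × ℤ × ℤ) ≃ (Fin 3 → ℤ) where
  toFun p := ![p.1, p.2.1, p.2.2]
  invFun v := (v 0, v 1, v 2)
  left_inv p := rfl
  right_inv v := by funext i; fin_cases i <;> rfl

lemma gsum : Summable (fun v : Fin 3 → ℤ => ∏ i, hfun (v i)) := by
  rw [← e3.summable_iff]
  have : Summable (fun p : ℤ × ℤ × ℤ => hfun p.1 * (hfun p.2.1 * hfun p.2.2)) :=
    hfun_summable.mul_of_nonneg
      (hfun_summable.mul_of_nonneg hfun_summable hfun_nonneg hfun_nonneg)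
      hfun_nonneg (fun p => mul_nonneg (hfun_nonneg _) (hfun_nonneg _))
  refine this.congr fun p => ?_
  show hfun p.1 * (hfun p.2.1 * hfun p.2.2) = ∏ i, hfun (e3 p i)
  rw [Fin.prod_univ_three]
  show _ = hfun (![p.1, p.2.1, p.2.2] 0) * hfun (![p.1, p.2.1, p.2.2] 1) * hfun (![p.1, p.2.1, p.2.2] 2)
  simp [mul_assoc]

lemma inv_sq_le (v : Fin 3 → ℤ) (hv : v ≠ 0) :
    1 / (∑ i, ((v i : ℝ))^2)^2 ≤ 4 * ∏ i, hfun (v i) := by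
  set S : ℝ := ∑ i, ((v i : ℝ))^2 with hS
  have hS1 : 1 ≤ S := by
    obtain ⟨i, hi⟩ := Function.ne_iff.mp hv
    have h1 : (1:ℝ) ≤ ((v i : ℝ))^2 := by
      have : (1:ℤ) ≤ (v i)^2 := by
        rcases lt_or_gt_of_ne (show v i ≠ 0 from hi) with h | h <;> nlinarith
      exact_mod_cast this
    calc (1:ℝ) ≤ ((v i : ℝ))^2 := h1
      _ ≤ S := hS ▸ Finset.single_le_sum (f := fun j => ((v j : ℝ))^2) (fun j _ => by positivity) (Finset.mem_univ i)
  have hprod : ∏ i, (1 + ((v i : ℝ))^2) ≤ (1 + S)^3 := by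
    have hb : ∀ i, 1 + ((v i : ℝ))^2 ≤ 1 + S := fun i => by
      have : ((v i : ℝ))^2 ≤ S :=
        hS ▸ Finset.single_le_sum (f := fun j => ((v j : ℝ))^2) (fun j _ => by positivity) (Finset.mem_univ i)
      linarith
    calc ∏ i, (1 + ((v i : ℝ))^2) ≤ ∏ i : Fin 3, (1 + S) :=
          Finset.prod_le_prod (fun i _ => by positivity) (fun i _ => hb i)
      _ = (1 + S)^3 := by simp [Finset.prod_const]
  have hmain : ((1 + S)^2)⁻¹ ≤ ∏ i, hfun (v i) := by
    have h1 : ∏ i, hfun (v i) = (∏ i, (1 + ((v i : ℝ))^2)) ^ (-(2/3) : ℝ) :=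
      Real.finset_prod_rpow _ _ (fun i _ => by positivity) _
    rw [h1]
    have h2 : ((1 + S)^3 : ℝ) ^ (-(2/3) : ℝ) ≤ (∏ i, (1 + ((v i : ℝ))^2)) ^ (-(2/3) : ℝ) :=
      Real.rpow_le_rpow_of_nonpos (Finset.prod_pos (fun i _ => by positivity)) hprod (by norm_num)
    refine le_trans (le_of_eq ?_) h2
    rw [← Real.rpow_natCast (1+S) 3, ← Real.rpow_mul (by positivity),
      ← Real.rpow_natCast (1+S) 2, ← Real.rpow_neg (by positivity)]
    norm_num
  have hS2 : (1 + S)^2 ≤ 4 * S^2 := by nlinarith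
  rw [one_div]
  calc (S^2)⁻¹ ≤ 4 * ((1+S)^2)⁻¹ := by
        rw [← one_div, ← one_div]
        rw [div_le_iff₀ (by positivity)]
        have : (4:ℝ) * (1/(1+S)^2) * S^2 = 4*S^2 / (1+S)^2 := by ring
        rw [this, le_div_iff₀ (by positivity)]
        nlinarith
    _ ≤ 4 * ∏ i, hfun (v i) := by linarith [mul_le_mul_of_nonneg_left hmain (by norm_num : (0:ℝ) ≤ 4)]

lemma one_le_S (v : Fin 3 → ℤ) (hv : v ≠ 0) : 1 ≤ ∑ i, ((v i : ℝ))^2 := by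
  obtain ⟨i, hi⟩ := Function.ne_iff.mp hv
  have h1 : (1:ℝ) ≤ ((v i : ℝ))^2 := by
    have : (1:ℤ) ≤ (v i)^2 := by
      rcases lt_or_gt_of_ne (show v i ≠ 0 from hi) with h | h <;> nlinarith
    exact_mod_cast this
  calc (1:ℝ) ≤ ((v i : ℝ))^2 := h1
    _ ≤ _ := Finset.single_le_sum (f := fun j => ((v j : ℝ))^2)
        (fun j _ => by positivity) (Finset.mem_univ i)

/-- Absolute convergence of the Bogoliubov energy sum over nonzero lattice momenta
`p ∈ 2πℤ³ \ {0}` of `p² + 8πa − √(|p|⁴ + 16πa p²) − (8πa)²/(2p²)`, for `a > 0`. -/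
theorem stmt0 (a : ℝ) (ha : 0 < a) :
    Summable (fun v : {v : Fin 3 → ℤ // v ≠ 0} =>
      |((2 * π) ^ 2 * ∑ i, ((v.1 i : ℝ)) ^ 2) + 8 * π * a
        - Real.sqrt (((2 * π) ^ 2 * ∑ i, ((v.1 i : ℝ)) ^ 2) ^ 2
            + 16 * π * a * ((2 * π) ^ 2 * ∑ i, ((v.1 i : ℝ)) ^ 2))
        - (8 * π * a) ^ 2 / (2 * ((2 * π) ^ 2 * ∑ i, ((v.1 i : ℝ)) ^ 2))|) := by
  have hpi := Real.pi_pos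
  have hb : 0 < 8 * π * a := by positivity
  set K : ℝ := 4 * (8*π*a)^3 / (2*π)^4 with hK
  have hmaj : Summable (fun v : {v : Fin 3 → ℤ // v ≠ 0} => K * ∏ i, hfun (v.1 i)) :=
    (gsum.mul_left K).comp_injective Subtype.coe_injective
  refine hmaj.of_nonneg_of_le (fun v => abs_nonneg _) (fun v => ?_)
  set S : ℝ := ∑ i, ((v.1 i : ℝ))^2 with hS
  have hS1 : 1 ≤ S := one_le_S v.1 v.2
  have hS0 : 0 < S := by linarith
  set x : ℝ := (2*π)^2 * S with hx
  have hx0 : 0 < x := by positivity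
  have harg : x ^ 2 + 16 * π * a * x = x^2 + 2*(8*π*a)*x := by ring
  have hden : (8*π*a)^2 / (2 * x) = (8*π*a)^2 / (2 * x) := rfl
  calc |x + 8*π*a - Real.sqrt (x^2 + 16*π*a*x) - (8*π*a)^2/(2*x)|
      = |x + 8*π*a - Real.sqrt (x^2 + 2*(8*π*a)*x) - (8*π*a)^2/(2*x)| := by rw [harg]
    _ ≤ (8*π*a)^3 / x^2 := key_bound (8*π*a) x hb hx0
    _ = ((8*π*a)^3 / (2*π)^4) * (1 / S^2) := by
        rw [hx]; field_simp
    _ ≤ ((8*π*a)^3 / (2*π)^4) * (4 * ∏ i, hfun (v.1 i)) := by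
        apply mul_le_mul_of_nonneg_left (inv_sq_le v.1 v.2) (by positivity)
    _ = K * ∏ i, hfun (v.1 i) := by rw [hK]; ring
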